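/- If X and Y are independent random variables (with Y real-valued and non-degenerate), then the Cramér–von Mises index ξ(X,Y) equals 0. -/

import Mathlib

open MeasureTheory ProbabilityTheory

/-- The Cramér–von Mises dependence index
`ξ(X,Y) = (∫ Var[E[1_{Y≤t} | X]] dP_Y(t)) / (∫ Var[1_{Y≤t}] dP_Y(t))`. -/
noncomputable def cvmIndex {Ω α : Type*} [MeasurableSpace Ω] [MeasurableSpace α]
    (μ : Measure Ω) (X : Ω → α) (Y : Ω → ℝ) : ℝ :=
  (∫ t, variance (μ[(fun ω => if Y ω ≤ t then (1 : ℝ) else 0) |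
      MeasurableSpace.comap X inferInstance]) μ ∂(μ.map Y)) /
  (∫ t, variance (fun ω => if Y ω ≤ t then (1 : ℝ) else 0) μ ∂(μ.map Y))


/-- if `X` and `Y` are independent (with `Y` real-valued and
non-degenerate, so the denominator is positive), then `ξ(X,Y) = 0`. -/
theorem cvmIndex_eq_zero_of_indepFun {Ω α : Type*} [MeasurableSpace Ω] [MeasurableSpace α]
    (μ : Measure Ω) [IsProbabilityMeasure μ] (X : Ω → α) (Y : Ω → ℝ)
    (hX : Measurable X) (hY : Measurable Y)
    (hden : 0 < ∫ t, variance (fun ω => if Y ω ≤ t then (1 : ℝ) else 0) μ ∂(μ.map Y))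
    (hindep : IndepFun X Y μ) :
    cvmIndex μ X Y = 0 := by
  unfold cvmIndex
  rw [div_eq_zero_iff]
  left
  have hnum : ∀ t : ℝ,
      variance (μ[(fun ω => if Y ω ≤ t then (1 : ℝ) else 0) |
        MeasurableSpace.comap X inferInstance]) μ = 0 := by
    intro t
    set f : Ω → ℝ := fun ω => if Y ω ≤ t then (1 : ℝ) else 0 with hf
    have hfm : StronglyMeasurable[MeasurableSpace.comap Y inferInstance] f := by
      have hset : MeasurableSet[MeasurableSpace.comap Y inferInstance] {ω | Y ω ≤ t} :=
        ⟨Set.Iic t, measurableSet_Iic, rfl⟩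
      exact (StronglyMeasurable.ite hset stronglyMeasurable_const stronglyMeasurable_const)
    have hce : μ[f | MeasurableSpace.comap X inferInstance] =ᵐ[μ] fun _ => μ[f] :=
      condExp_indep_eq hY.comap_le hX.comap_le hfm hindep.symm
    have hsm := stronglyMeasurable_condExp (m := MeasurableSpace.comap X inferInstance)
      (f := f) (μ := μ)
    have hmeas : AEMeasurable (μ[f | MeasurableSpace.comap X inferInstance]) μ :=
      (hsm.mono hX.comap_le).measurable.aemeasurable
    have hconst : μ[f | MeasurableSpace.comap X inferInstance] =ᵐ[μ]
        fun _ => μ[μ[f | MeasurableSpace.comap X inferInstance]] := by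
      have hint : μ[μ[f | MeasurableSpace.comap X inferInstance]] = μ[f] := by
        rw [integral_congr_ae hce]
        simp
      rw [hint]; exact hce
    have hev : evariance (μ[f | MeasurableSpace.comap X inferInstance]) μ = 0 :=
      (evariance_eq_zero_iff hmeas).mpr hconst
    simp [variance, hev]
  simp [hnum]
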